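/- There exists a constant c = c(d) < ∞ such that for every common weight distribution F satisfying ∫_0^∞ (1 − F(s))^{1/d} ds < ∞, with probability 1, limsup_{n→∞} (1/n) max_{z ∈ ℤ_+^d : ‖z‖ ≤ n} T(z) ≤ c ∫_0^∞ (1 − F(s))^{1/d} ds. -/

import Mathlib

open MeasureTheory ProbabilityTheory Filter Topology

noncomputable section

/-- `p` is a directed path from the origin `0` to `z` in `ℤ₊^d`: it visits
`∑ i, z i` sites starting at the origin, each step increasing one coordinate by `1`,
and reaches `z` after `∑ i, z i` steps (the final point `z` is excluded from the path). -/
def IsDirPath {d : ℕ} (z : Fin d → ℕ) (p : ℕ → Fin d → ℕ) : Prop :=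
  p 0 = 0 ∧ p (∑ i, z i) = z ∧
    ∀ k < ∑ i, z i, ∃ j : Fin d, p (k + 1) = Function.update (p k) j (p k j + 1)

/-- The last-passage time `T(z)`: the maximal weight of a directed path from `0` to `z`,
the weight of a path being the sum of the weights of its sites (excluding `z`). -/
def lastPassage {Ω : Type} {d : ℕ} (X : (Fin d → ℕ) → Ω → ℝ) (z : Fin d → ℕ) (ω : Ω) : ℝ :=
  sSup {s | ∃ p, IsDirPath z p ∧ s = ∑ k ∈ Finset.range (∑ i, z i), X (p k) ω}

/-- The shape function `g(x) = sup_{n ≥ 1} (1/n) E T(⌊n x⌋)` (real-valued version). -/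
def shape {Ω : Type} [MeasurableSpace Ω] {d : ℕ} (X : (Fin d → ℕ) → Ω → ℝ)
    (P : Measure Ω) (x : Fin d → ℝ) : ℝ :=
  ⨆ n : ℕ+, ((n : ℕ) : ℝ)⁻¹ * ∫ ω, lastPassage X (fun i => ⌊((n : ℕ) : ℝ) * x i⌋₊) ω ∂P

/-- The weights `{X(z)}` are i.i.d. with common distribution function `F`. -/
def IID {Ω : Type} [MeasurableSpace Ω] {d : ℕ} (X : (Fin d → ℕ) → Ω → ℝ)
    (P : Measure Ω) (F : ℝ → ℝ) : Prop :=
  (∀ z, Measurable (X z)) ∧ iIndepFun X P ∧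
    ∀ z s, P {ω | X z ω ≤ s} = ENNReal.ofReal (F s)

open scoped ENNReal NNReal

set_option linter.unusedSectionVars false
set_option maxHeartbeats 1000000

namespace DirPerc

variable {d : ℕ}

/-- there exist `k` sites, totally ordered, inside the box `[0,N]^d`, all with weight `> t`. -/
def Chain (d N k : ℕ) (t : ℝ) (Y : (Fin d → ℕ) → ℝ) : Prop :=
  ∃ w : Fin k → (Fin d → ℕ), StrictMono w ∧ (∀ i a, w i a ≤ N) ∧ ∀ i, t < Y (w i)

def tlev (A : ℝ) (N : ℕ) (l : ℕ) : ℝ := A * N / 2 ^ l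

lemma sum_update_succ (f : Fin d → ℕ) (j : Fin d) :
    ∑ i, Function.update f j (f j + 1) i = (∑ i, f i) + 1 := by
  have h1 := Finset.sum_update_of_mem (Finset.mem_univ j) f (f j + 1)
  have h2 := Finset.sum_erase_add Finset.univ f (Finset.mem_univ j)
  rw [← Finset.erase_eq] at h1
  omega

lemma dirPath_sum_eq {z : Fin d → ℕ} {p : ℕ → Fin d → ℕ} (hp : IsDirPath z p) :
    ∀ k, k ≤ ∑ i, z i → ∑ i, p k i = k := by
  intro k
  induction k with
  | zero => intro _; simp [hp.1]
  | succ k ih =>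
    intro hk
    obtain ⟨j, hj⟩ := hp.2.2 k (by omega)
    rw [hj, sum_update_succ, ih (by omega)]

lemma dirPath_mono {z : Fin d → ℕ} {p : ℕ → Fin d → ℕ} (hp : IsDirPath z p)
    {a b : ℕ} (hab : a ≤ b) (hb : b ≤ ∑ i, z i) : p a ≤ p b := by
  induction b with
  | zero => simp_all
  | succ b ih =>
    rcases Nat.eq_or_lt_of_le hab with rfl | h
    · exact le_refl _
    · refine le_trans (ih (by omega) (by omega)) ?_
      obtain ⟨j, hj⟩ := hp.2.2 b (by omega)
      rw [hj]
      intro i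
      rcases eq_or_ne i j with rfl | hne
      · simp
      · simp [Function.update_of_ne hne]

lemma dirPath_lt {z : Fin d → ℕ} {p : ℕ → Fin d → ℕ} (hp : IsDirPath z p)
    {a b : ℕ} (hab : a < b) (hb : b ≤ ∑ i, z i) : p a < p b := by
  refine lt_of_le_of_ne (dirPath_mono hp hab.le hb) (fun h => ?_)
  have h1 := dirPath_sum_eq hp a (by omega)
  have h2 := dirPath_sum_eq hp b hb
  rw [h] at h1
  omega

lemma dirPath_coord_le {z : Fin d → ℕ} {p : ℕ → Fin d → ℕ} (hp : IsDirPath z p)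
    {k : ℕ} (hk : k ≤ ∑ i, z i) (i : Fin d) : p k i ≤ k :=
  (Finset.single_le_sum (fun _ _ => Nat.zero_le _) (Finset.mem_univ i)).trans
    (le_of_eq (dirPath_sum_eq hp k hk))

lemma exists_isDirPath (z : Fin d → ℕ) : ∃ p, IsDirPath z p := by
  suffices h : ∀ m (z : Fin d → ℕ), (∑ i, z i) = m → ∃ p, IsDirPath z p from
    h _ z rfl
  intro m
  induction m with
  | zero =>
    intro z hz
    have hz0 : ∀ i, z i = 0 := by
      intro i
      exact (Finset.sum_eq_zero_iff.mp hz) i (Finset.mem_univ i)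
    refine ⟨fun _ _ => 0, ?_, ?_, ?_⟩
    · rfl
    · funext i; exact (hz0 i).symm
    · intro k hk; rw [hz] at hk; omega
  | succ m ih =>
    intro z hz
    have hex : ∃ i, z i ≠ 0 := by
      by_contra hc
      push_neg at hc
      rw [Finset.sum_eq_zero (fun i _ => hc i)] at hz
      omega
    obtain ⟨i0, hi0⟩ := hex
    set z' := Function.update z i0 (z i0 - 1) with hz'def
    have hz' : ∑ i, z' i = m := by
      have h1 := Finset.sum_update_of_mem (Finset.mem_univ i0) z (z i0 - 1)
      have h2 := Finset.sum_erase_add Finset.univ z (Finset.mem_univ i0)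
      rw [← Finset.erase_eq] at h1
      have h3 : ∑ i, z' i = (z i0 - 1) + ∑ i ∈ Finset.univ.erase i0, z i := h1
      omega
    obtain ⟨p', hp'⟩ := ih z' hz'
    refine ⟨Function.update p' (m+1) z, ?_, ?_, ?_⟩
    · rw [Function.update_of_ne (by omega)]; exact hp'.1
    · rw [hz, Function.update_self]
    · intro k hk
      rw [hz] at hk
      by_cases hk' : k + 1 = m + 1
      · refine ⟨i0, ?_⟩
        have hpm : p' k = z' := by
          have hkm : k = ∑ i, z' i := by omega
          rw [hkm]; exact hp'.2.1
        rw [hk', Function.update_self, Function.update_of_ne (by omega : k ≠ m+1), hpm]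
        funext i
        rcases eq_or_ne i i0 with rfl | hne
        · rw [Function.update_self, hz'def, Function.update_self]; omega
        · simp [hz'def, Function.update_of_ne hne]
      · obtain ⟨j, hj⟩ := hp'.2.2 k (by omega)
        refine ⟨j, ?_⟩
        rw [Function.update_of_ne hk', Function.update_of_ne (by omega : k ≠ m+1)]
        exact hj

lemma lastPassage_le {Ω : Type} (X : (Fin d → ℕ) → Ω → ℝ) (z : Fin d → ℕ) (ω : Ω) {B : ℝ}
    (hB0 : 0 ≤ B)
    (hB : ∀ p, IsDirPath z p → ∑ k ∈ Finset.range (∑ i, z i), X (p k) ω ≤ B) :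
    lastPassage X z ω ≤ B := by
  unfold lastPassage
  refine Real.sSup_le ?_ hB0
  rintro s ⟨p, hp, rfl⟩
  exact hB p hp

lemma lastPassage_zero {Ω : Type} (X : (Fin d → ℕ) → Ω → ℝ) (ω : Ω) :
    lastPassage X (fun _ => 0) ω = 0 := by
  have h : lastPassage X (fun _ => 0) ω = sSup {(0:ℝ)} := by
    unfold lastPassage
    congr 1
    ext s
    simp only [Set.mem_setOf_eq, Set.mem_singleton_iff]
    constructor
    · rintro ⟨p, _, rfl⟩
      simp
    · rintro rfl
      refine ⟨fun _ _ => 0, ⟨rfl, ?_, ?_⟩, by simp⟩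
      · funext i; simp
      · intro k hk; simp at hk
  rw [h, csSup_singleton]


lemma geom_sum_aux : ∀ L : ℕ, ∑ l ∈ Finset.Icc 1 L, (2*(l:ℝ)+1)/2^l = 5 - (2*L+5)/2^L := by
  intro L
  induction L with
  | zero => simp
  | succ L ih =>
    rw [Finset.sum_Icc_succ_top (by omega), ih]
    have h2 : (2:ℝ)^L ≠ 0 := by positivity
    push_cast
    field_simp
    ring

lemma geom_sum_le5 (L : ℕ) : ∑ l ∈ Finset.Icc 1 L, (2*(l:ℝ)+1)/2^l ≤ 5 := by
  rw [geom_sum_aux]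
  have : (0:ℝ) ≤ (2*L+5)/2^L := by positivity
  linarith

lemma count_lt_of_no_chain {N k : ℕ} {t : ℝ} {Y : (Fin d → ℕ) → ℝ}
    (hnc : ¬ Chain d N k t Y) {z : Fin d → ℕ} {p : ℕ → Fin d → ℕ}
    (hp : IsDirPath z p) (hzN : ∑ i, z i ≤ N) :
    ((Finset.range (∑ i, z i)).filter (fun n => t < Y (p n))).card < k := by
  by_contra hc
  push_neg at hc
  obtain ⟨G, hGsub, hGcard⟩ := Finset.exists_subset_card_eq hc
  have hGmem : ∀ i : Fin k, G.orderEmbOfFin hGcard i ∈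
      (Finset.range (∑ i, z i)).filter (fun n => t < Y (p n)) :=
    fun i => hGsub (G.orderEmbOfFin_mem hGcard i)
  have hGlt : ∀ i : Fin k, G.orderEmbOfFin hGcard i < ∑ i, z i := by
    intro i
    have := (Finset.mem_filter.mp (hGmem i)).1
    exact Finset.mem_range.mp this
  apply hnc
  refine ⟨fun i => p (G.orderEmbOfFin hGcard i), ?_, ?_, ?_⟩
  · intro a b hab
    exact dirPath_lt hp ((G.orderEmbOfFin hGcard).strictMono hab) (le_of_lt (hGlt b))
  · intro i a
    exact le_trans (dirPath_coord_le hp (le_of_lt (hGlt i)) a) (by have := hGlt i; omega)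
  · intro i
    exact (Finset.mem_filter.mp (hGmem i)).2

lemma tlev_pos {A : ℝ} (hA : 0 < A) {N l : ℕ} (hN : 0 < N) : 0 < tlev A N l := by
  unfold tlev
  have : (0:ℝ) < N := by exact_mod_cast hN
  positivity

lemma tlev_cast {A : ℝ} (j l : ℕ) : tlev A (2^j) l = A * 2^j / 2^l := by
  unfold tlev; push_cast; ring

lemma tlev_bot {A : ℝ} {j : ℕ} (hj : 6 ≤ j) : tlev A (2^j) (j-5) = 32 * A := by
  rw [tlev_cast]
  have h : (2:ℝ)^j = 2^(j-5) * 2^5 := by rw [← pow_add]; congr 1; omega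
  rw [h]
  have h2 : (2:ℝ)^(j-5) ≠ 0 := by positivity
  field_simp
  ring

lemma tlev_half {A : ℝ} {j l : ℕ} (hl : 1 ≤ l) :
    tlev A (2^j) (l-1) = 2 * tlev A (2^j) l := by
  rw [tlev_cast, tlev_cast]
  have h : (2:ℝ)^l = 2^(l-1) * 2 := by rw [← pow_succ]; congr 1; omega
  rw [h]
  have h2 : (2:ℝ)^(l-1) ≠ 0 := by positivity
  field_simp

lemma pointwise_decomp {A x : ℝ} (hA : 0 < A) {j : ℕ} (hj : 6 ≤ j)
    (hcap : x ≤ A * 2 ^ j) :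
    x ≤ 64*A + ∑ l ∈ Finset.Icc 1 (j-5),
      (if tlev A (2^j) l < x then 2 * tlev A (2^j) l else 0) := by
  have hpos : ∀ l : ℕ, (0:ℝ) < tlev A (2^j) l := fun l => tlev_pos hA (pow_pos (by norm_num) j)
  have hnn : (0:ℝ) ≤ ∑ l ∈ Finset.Icc 1 (j-5),
      (if tlev A (2^j) l < x then 2 * tlev A (2^j) l else 0) := by
    apply Finset.sum_nonneg
    intro l _
    split
    · linarith [hpos l]
    · exact le_refl 0
  by_cases hx : x ≤ 64 * A
  · linarith
  · push_neg at hx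
    have hex : ∃ l, tlev A (2^j) l < x := by
      refine ⟨j-5, ?_⟩
      rw [tlev_bot hj]
      linarith
    classical
    let l0 := Nat.find hex
    have hl0 : tlev A (2^j) l0 < x := Nat.find_spec hex
    have hl0le : l0 ≤ j - 5 := Nat.find_min' hex (by rw [tlev_bot hj]; linarith)
    have hl0pos : 1 ≤ l0 := by
      by_contra h0
      have : l0 = 0 := by omega
      rw [this] at hl0
      have : tlev A (2^j) 0 = A * 2^j := by rw [tlev_cast]; simp
      rw [this] at hl0
      linarith
    have hx2 : x ≤ 2 * tlev A (2^j) l0 := by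
      have hmin := Nat.find_min hex (m := l0 - 1) (by omega)
      push_neg at hmin
      calc x ≤ tlev A (2^j) (l0-1) := hmin
      _ = 2 * tlev A (2^j) l0 := tlev_half hl0pos
    have hmem : l0 ∈ Finset.Icc 1 (j-5) := Finset.mem_Icc.mpr ⟨hl0pos, hl0le⟩
    have hsingle : 2 * tlev A (2^j) l0 ≤ ∑ l ∈ Finset.Icc 1 (j-5),
        (if tlev A (2^j) l < x then 2 * tlev A (2^j) l else 0) := by
      have h := Finset.single_le_sum (f := fun l => if tlev A (2^j) l < x then 2 * tlev A (2^j) l else 0)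
        (fun l _ => by
          split
          · linarith [hpos l]
          · exact le_refl 0) hmem
      rwa [if_pos hl0] at h
    linarith

lemma det_pathsum_le {A : ℝ} (hA : 0 < A) {j : ℕ} (hj : 6 ≤ j) (Y : (Fin d → ℕ) → ℝ)
    (g : ℕ → ℝ) (hg0 : ∀ l, 0 ≤ g l)
    (hcap : ¬ Chain d (2^j) 1 (A * 2^j) Y)
    (hlev : ∀ l ∈ Finset.Icc 1 (j-5),
      ¬ Chain d (2^j) (⌈(32:ℝ) * (2^j) * g l⌉₊ + 2*l + 1) (tlev A (2^j) l) Y)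
    (hsum : ∑ l ∈ Finset.Icc 1 (j-5), tlev A (2^j) l * g l ≤ 2 * A)
    {z : Fin d → ℕ} (hz : ∑ i, z i ≤ 2^j) {p : ℕ → Fin d → ℕ} (hp : IsDirPath z p) :
    ∑ k ∈ Finset.range (∑ i, z i), Y (p k) ≤ 202 * A * 2^j := by
  set m := ∑ i, z i with hm
  -- each site weight is at most A * 2^j
  have hsite : ∀ k, k < m → Y (p k) ≤ A * 2^j := by
    intro k hk
    by_contra hgt
    push_neg at hgt
    apply hcap
    refine ⟨fun _ => p k, ?_, ?_, fun _ => hgt⟩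
    · intro a b hab
      exact absurd hab (by omega)
    · intro _ a
      exact le_trans (dirPath_coord_le hp (le_of_lt hk) a) (by omega)
  -- pointwise decomposition summed over the path
  have h1 : ∑ k ∈ Finset.range m, Y (p k) ≤
      ∑ k ∈ Finset.range m, (64*A + ∑ l ∈ Finset.Icc 1 (j-5),
        (if tlev A (2^j) l < Y (p k) then 2 * tlev A (2^j) l else 0)) := by
    apply Finset.sum_le_sum
    intro k hk
    exact pointwise_decomp hA hj (hsite k (Finset.mem_range.mp hk))
  rw [Finset.sum_add_distrib, Finset.sum_const, Finset.sum_comm] at h1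
  -- level contribution
  have h2 : ∀ l ∈ Finset.Icc 1 (j-5),
      (∑ k ∈ Finset.range m, (if tlev A (2^j) l < Y (p k) then 2 * tlev A (2^j) l else 0))
        ≤ (32 * (2:ℝ)^j * g l + 2*l + 1) * (2 * tlev A (2^j) l) := by
    intro l hl
    rw [← Finset.sum_filter]
    rw [Finset.sum_const, nsmul_eq_mul]
    have hcard := count_lt_of_no_chain (hlev l hl) hp hz
    rw [← hm] at hcard
    have hcardR : ((((Finset.range m).filter (fun n => tlev A (2^j) l < Y (p n))).card : ℝ))
        ≤ 32 * (2:ℝ)^j * g l + 2*l + 1 := by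
      have hceil : (↑⌈(32:ℝ) * (2^j) * g l⌉₊ : ℝ) < 32 * (2:ℝ)^j * g l + 1 := by
        apply Nat.ceil_lt_add_one
        have : (0:ℝ) ≤ (2:ℝ)^j := by positivity
        have := hg0 l
        positivity
      have hcard' : (((Finset.range m).filter (fun n => tlev A (2^j) l < Y (p n))).card : ℝ)
          ≤ (⌈(32:ℝ) * (2^j) * g l⌉₊ : ℝ) + 2*l := by
        have : ((Finset.range m).filter (fun n => tlev A (2^j) l < Y (p n))).card
            ≤ ⌈(32:ℝ) * (2^j) * g l⌉₊ + 2*l := by omega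
        exact_mod_cast this
      linarith
    have htl : 0 < tlev A (2^j) l := tlev_pos hA (pow_pos (by norm_num) j)
    exact mul_le_mul_of_nonneg_right hcardR (by linarith)
  have h3 := Finset.sum_le_sum h2
  have h4 : ∀ l ∈ Finset.Icc 1 (j-5), (32 * (2:ℝ)^j * g l + 2*(l:ℝ) + 1) * (2 * tlev A (2^j) l)
      = 64*(2:ℝ)^j * (tlev A (2^j) l * g l) + (2*A*2^j) * ((2*(l:ℝ)+1)/2^l) := by
    intro l _
    rw [tlev_cast]
    have h2l : (2:ℝ)^l ≠ 0 := by positivity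
    field_simp
    ring
  rw [Finset.sum_congr rfl h4, Finset.sum_add_distrib, ← Finset.mul_sum, ← Finset.mul_sum] at h3
  have hsum' : 64*(2:ℝ)^j * (∑ l ∈ Finset.Icc 1 (j-5), tlev A (2^j) l * g l)
      ≤ 64*(2:ℝ)^j*(2*A) := by
    apply mul_le_mul_of_nonneg_left hsum (by positivity)
  have h6 : (2*A*(2:ℝ)^j) * (∑ l ∈ Finset.Icc 1 (j-5), (2*(l:ℝ)+1)/2^l)
      ≤ 2*A*(2:ℝ)^j*5 :=
    mul_le_mul_of_nonneg_left (geom_sum_le5 (j-5)) (by positivity)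
  rw [Finset.card_range, nsmul_eq_mul] at h1
  have hmR : (m:ℝ) ≤ (2:ℝ)^j := by exact_mod_cast hz
  have hm64 : (m:ℝ) * (64*A) ≤ (2:ℝ)^j * (64*A) :=
    mul_le_mul_of_nonneg_right hmR (by positivity)
  linarith


instance instPiNatDecLE {d : ℕ} : DecidableRel (α := Fin d → ℕ) (· ≤ ·) :=
  fun f g => decidable_of_iff (∀ i, f i ≤ g i) Iff.rfl

instance instPiNatDecLT {d : ℕ} : DecidableRel (α := Fin d → ℕ) (· < ·) :=
  fun f g => decidable_of_iff (f ≤ g ∧ ¬ g ≤ f) lt_iff_le_not_ge.symm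

/-! ### counting -/

lemma card_monotone_le (M k : ℕ) :
    Fintype.card {f : Fin k → Fin (M+1) // Monotone f} ≤ (M + k).choose k := by
  classical
  have hcard : Fintype.card {s : Finset (Fin (M+k)) // s.card = k} = (M+k).choose k := by
    rw [Fintype.card_finset_len, Fintype.card_fin]
  rw [← hcard]
  have hlt : ∀ (f : {f : Fin k → Fin (M+1) // Monotone f}) (i : Fin k),
      (f.1 i : ℕ) + (i : ℕ) < M + k := by
    intro f i
    have h1 : (f.1 i : ℕ) < M + 1 := (f.1 i).2
    have h2 : (i : ℕ) < k := i.2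
    omega
  set gmap : {f : Fin k → Fin (M+1) // Monotone f} → (Fin k → Fin (M+k)) :=
    fun f i => ⟨(f.1 i : ℕ) + (i : ℕ), hlt f i⟩ with hgmap
  have hsm : ∀ f, StrictMono (gmap f) := by
    intro f a b hab
    have h1 : (f.1 a : ℕ) ≤ (f.1 b : ℕ) := f.2 hab.le
    have h2 : (a : ℕ) < (b : ℕ) := hab
    simp only [hgmap, Fin.mk_lt_mk]
    omega
  refine Fintype.card_le_of_injective
    (fun f => ⟨Finset.image (gmap f) Finset.univ, ?_⟩) ?_
  · rw [Finset.card_image_of_injective _ (hsm f).injective, Finset.card_univ,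
      Fintype.card_fin]
  · intro f1 f2 hf
    have him : Finset.image (gmap f1) Finset.univ = Finset.image (gmap f2) Finset.univ :=
      congrArg Subtype.val hf
    have hcard1 : (Finset.image (gmap f1) Finset.univ).card = k := by
      rw [Finset.card_image_of_injective _ (hsm f1).injective, Finset.card_univ,
        Fintype.card_fin]
    have he1 : gmap f1 = (Finset.image (gmap f1) Finset.univ).orderEmbOfFin hcard1 :=
      Finset.orderEmbOfFin_unique hcard1
        (fun i => Finset.mem_image_of_mem _ (Finset.mem_univ i)) (hsm f1)
    have he2 : gmap f2 = (Finset.image (gmap f1) Finset.univ).orderEmbOfFin hcard1 :=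
      Finset.orderEmbOfFin_unique hcard1
        (fun i => by rw [him]; exact Finset.mem_image_of_mem _ (Finset.mem_univ i)) (hsm f2)
    have hg : gmap f1 = gmap f2 := he1.trans he2.symm
    apply Subtype.ext
    funext i
    have hval := congrArg Fin.val (congrFun hg i)
    simp only [hgmap] at hval
    exact Fin.ext (by omega)

/-- the finset of (encoded) chains -/
def chainFinset (d N k : ℕ) : Finset (Fin k → Fin d → Fin (N+1)) :=
  Finset.univ.filter (fun w => StrictMono (fun i (a : Fin d) => ((w i a : ℕ))))

lemma card_chainFinset_le (N k : ℕ) :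
    (chainFinset d N k).card ≤ ((N + k).choose k)^d := by
  classical
  have h1 : (chainFinset d N k).card
      = Fintype.card {w : Fin k → Fin d → Fin (N+1) //
          StrictMono (fun i (a : Fin d) => ((w i a : ℕ)))} := by
    rw [Fintype.card_subtype]
    rfl
  rw [h1]
  have h2 : Fintype.card (Fin d → {f : Fin k → Fin (N+1) // Monotone f})
      ≤ ((N + k).choose k)^d := by
    rw [Fintype.card_fun, Fintype.card_fin]
    exact Nat.pow_le_pow_left (card_monotone_le N k) d
  refine le_trans (Fintype.card_le_of_injective ?_ ?_) h2
  · refine fun w a => ⟨fun i => w.1 i a, ?_⟩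
    intro i i' hii
    rcases eq_or_lt_of_le hii with rfl | hlt
    · exact le_refl _
    · exact Fin.le_def.mpr ((w.2 hlt).le a)
  · intro w1 w2 hw
    apply Subtype.ext
    funext i a
    have := congrArg (fun F => (F a).1 i) hw
    simpa using this

/-! ### probability bound -/

variable {Ω : Type} [MeasurableSpace Ω] {P : Measure Ω} [IsProbabilityMeasure P]
  {X : (Fin d → ℕ) → Ω → ℝ} {F : ℝ → ℝ}

lemma meas_gt_eq (hmeas : ∀ z, Measurable (X z))
    (hF : ∀ z s, P {ω | X z ω ≤ s} = ENNReal.ofReal (F s)) (v : Fin d → ℕ) (t : ℝ) :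
    P ((X v)⁻¹' (Set.Ioi t)) = 1 - ENNReal.ofReal (F t) := by
  have hs : MeasurableSet {ω | X v ω ≤ t} := by
    have h : {ω | X v ω ≤ t} = (X v)⁻¹' (Set.Iic t) := rfl
    rw [h]; exact (hmeas v) measurableSet_Iic
  have hc : (X v)⁻¹' (Set.Ioi t) = {ω | X v ω ≤ t}ᶜ := by
    ext ω; simp [not_le]
  rw [hc, prob_compl_eq_one_sub hs, hF]

lemma meas_chain_le (hmeas : ∀ z, Measurable (X z))
    (hind : iIndepFun X P)
    (hF : ∀ z s, P {ω | X z ω ≤ s} = ENNReal.ofReal (F s))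
    (N k : ℕ) (t : ℝ) :
    P {ω | Chain d N k t (fun v => X v ω)} ≤
      (((N + k).choose k : ℝ≥0∞))^d * (1 - ENNReal.ofReal (F t))^k := by
  classical
  have hsub : {ω | Chain d N k t (fun v => X v ω)} ⊆
      ⋃ w ∈ chainFinset d N k,
        ⋂ i : Fin k, (X (fun a => ((w i a : ℕ))))⁻¹' (Set.Ioi t) := by
    rintro ω ⟨w, hsm, hbox, hgt⟩
    have hlt : ∀ i a, w i a < N + 1 := fun i a => by have := hbox i a; omega
    set w' : Fin k → Fin d → Fin (N+1) := fun i a => ⟨w i a, hlt i a⟩ with hw'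
    have hcoe : (fun i (a : Fin d) => ((w' i a : ℕ))) = w := rfl
    have hmem : w' ∈ chainFinset d N k := by
      unfold chainFinset
      rw [Finset.mem_filter]
      exact ⟨Finset.mem_univ _, by rw [hcoe]; exact hsm⟩
    refine Set.mem_biUnion hmem ?_
    refine Set.mem_iInter.mpr (fun i => ?_)
    have h2 : (fun a => ((w' i a : ℕ))) = w i := rfl
    rw [h2]
    exact hgt i
  refine (measure_mono hsub).trans ?_
  refine (measure_biUnion_finset_le _ _).trans ?_
  have hbound : ∀ w ∈ chainFinset d N k,
      P (⋂ i : Fin k, (X (fun a => ((w i a : ℕ))))⁻¹' (Set.Ioi t))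
        ≤ (1 - ENNReal.ofReal (F t))^k := by
    intro w hw
    have hsm : StrictMono (fun i (a : Fin d) => ((w i a : ℕ))) := by
      unfold chainFinset at hw
      rw [Finset.mem_filter] at hw
      exact hw.2
    set cw : Fin k → (Fin d → ℕ) := fun i a => ((w i a : ℕ)) with hcw
    have hinj : Function.Injective cw := hsm.injective
    have him : (⋂ i : Fin k, (X (cw i))⁻¹' (Set.Ioi t)) =
        ⋂ v ∈ Finset.image cw Finset.univ, (X v)⁻¹' (Set.Ioi t) := by
      ext ω
      simp only [Set.mem_iInter, Finset.mem_image, Finset.mem_univ, true_and]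
      constructor
      · rintro h v ⟨i, rfl⟩
        exact h i
      · intro h i
        exact h _ ⟨i, rfl⟩
    rw [him, hind.meas_biInter (fun v _ => ⟨Set.Ioi t, measurableSet_Ioi, rfl⟩)]
    have hprod : ∀ v ∈ Finset.image cw Finset.univ,
        P ((X v)⁻¹' (Set.Ioi t)) = 1 - ENNReal.ofReal (F t) :=
      fun v _ => meas_gt_eq hmeas hF v t
    rw [Finset.prod_congr rfl hprod, Finset.prod_const,
      Finset.card_image_of_injective _ hinj, Finset.card_univ, Fintype.card_fin]
  refine (Finset.sum_le_sum hbound).trans ?_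
  rw [Finset.sum_const, nsmul_eq_mul]
  refine mul_le_mul_left ?_ _
  have hcc := card_chainFinset_le (d := d) N k
  calc ((chainFinset d N k).card : ℝ≥0∞)
      ≤ ((((N+k).choose k)^d : ℕ) : ℝ≥0∞) := by exact_mod_cast hcc
    _ = (((N + k).choose k : ℝ≥0∞))^d := by push_cast; rfl

/-! ### numeric bounds -/

lemma pow_succ_le_three_pow_factorial (k : ℕ) :
    ((k:ℝ)+1)^k ≤ 3^k * (Nat.factorial k) := by
  induction k with
  | zero => norm_num
  | succ k ih =>
    have hk1 : (0:ℝ) < (k:ℝ)+1 := by positivity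
    have hexp : ((k:ℝ)+1) + 1 ≤ Real.exp (1/((k:ℝ)+1)) * ((k:ℝ)+1) := by
      have h := Real.add_one_le_exp (1/((k:ℝ)+1))
      have h2 := mul_le_mul_of_nonneg_right h (le_of_lt hk1)
      calc ((k:ℝ)+1) + 1 = (1/((k:ℝ)+1) + 1) * ((k:ℝ)+1) := by field_simp; ring
        _ ≤ _ := h2
    have hexp1 : Real.exp (1/((k:ℝ)+1)) ^ (k+1) = Real.exp 1 := by
      rw [← Real.exp_nat_mul]
      congr 1
      push_cast
      field_simp
    have h2 : (((k:ℝ)+1)+1)^(k+1) ≤ Real.exp 1 * ((k:ℝ)+1)^(k+1) := by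
      calc (((k:ℝ)+1)+1)^(k+1) ≤ (Real.exp (1/((k:ℝ)+1)) * ((k:ℝ)+1))^(k+1) := by
            apply pow_le_pow_left₀ (by positivity) hexp
        _ = Real.exp 1 * ((k:ℝ)+1)^(k+1) := by rw [mul_pow, hexp1]
    have h3 : Real.exp 1 ≤ 3 := le_trans Real.exp_one_lt_d9.le (by norm_num)
    have h4 : ((k:ℝ)+1)^(k+1) = ((k:ℝ)+1)^k * ((k:ℝ)+1) := pow_succ _ _
    have hfac : (Nat.factorial (k+1) : ℝ) = ((k:ℝ)+1) * (Nat.factorial k) := by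
      rw [Nat.factorial_succ]; push_cast; ring
    have hexp0 : (0:ℝ) ≤ Real.exp 1 := (Real.exp_pos 1).le
    calc (((k+1:ℕ):ℝ)+1)^(k+1) = (((k:ℝ)+1)+1)^(k+1) := by push_cast; ring_nf
      _ ≤ Real.exp 1 * ((k:ℝ)+1)^(k+1) := h2
      _ ≤ 3 * (((k:ℝ)+1)^k * ((k:ℝ)+1)) := by
            rw [← h4]
            exact mul_le_mul_of_nonneg_right h3 (by positivity)
      _ ≤ 3 * ((3^k * (Nat.factorial k)) * ((k:ℝ)+1)) := by
            have hmm : ((k:ℝ)+1)^k * ((k:ℝ)+1) ≤ (3^k * (Nat.factorial k)) * ((k:ℝ)+1) :=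
              mul_le_mul_of_nonneg_right ih (by positivity)
            linarith
      _ = 3^(k+1) * (Nat.factorial (k+1)) := by rw [hfac]; ring

lemma choose_le_pow_three {m k : ℕ} (hk : 1 ≤ k) :
    (m.choose k : ℝ) ≤ (3*(m:ℝ)/k)^k := by
  have h1 : (m.choose k : ℝ) ≤ (m:ℝ)^k / (Nat.factorial k) := by
    have := Nat.choose_le_pow_div (α := ℝ) k m
    simpa using this
  have h2 : (k:ℝ)^k ≤ 3^k * (Nat.factorial k) := by
    refine le_trans ?_ (pow_succ_le_three_pow_factorial k)
    apply pow_le_pow_left₀ (by positivity)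
    linarith
  have hkpos : (0:ℝ) < (k:ℝ) := by exact_mod_cast hk
  have hfacpos : (0:ℝ) < (Nat.factorial k : ℝ) := by exact_mod_cast k.factorial_pos
  refine h1.trans ?_
  rw [div_pow, div_le_div_iff₀ hfacpos (by positivity)]
  calc (m:ℝ)^k * (k:ℝ)^k ≤ (m:ℝ)^k * (3^k * (Nat.factorial k)) := by
        apply mul_le_mul_of_nonneg_left h2 (by positivity)
    _ = (3*(m:ℝ))^k * (Nat.factorial k) := by rw [mul_pow]; ring

lemma level_prob_bound {N k l : ℕ} {c1 : ℝ} (hc0 : 0 ≤ c1) (hc1 : c1 ≤ 1/32)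
    (hk1 : 32 * (N:ℝ) * c1 ≤ k) (hk2 : 2*l+1 ≤ k) (hk3 : k ≤ 2*N) :
    (((N + k).choose k : ℝ))^d * (c1^d)^k ≤ (1/16:ℝ)^(d*l) * (9*(N:ℝ))^d * c1^d := by
  have hk : 1 ≤ k := by omega
  have hkR : (1:ℝ) ≤ (k:ℝ) := by exact_mod_cast hk
  have hkpos : (0:ℝ) < (k:ℝ) := by linarith
  have hNpos : 1 ≤ N := by omega
  have hNR : (1:ℝ) ≤ (N:ℝ) := by exact_mod_cast hNpos
  have hk3R : (k:ℝ) ≤ 2*(N:ℝ) := by exact_mod_cast hk3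
  set ρ := 3*((N:ℝ)+(k:ℝ))*c1/(k:ℝ) with hρ
  have hρ0 : 0 ≤ ρ := by
    rw [hρ]
    positivity
  have hρ14 : ρ ≤ 1/4 := by
    rw [hρ, div_le_iff₀ hkpos]
    nlinarith
  have hchoose : (((N + k).choose k : ℝ)) ≤ (3*((N:ℝ)+(k:ℝ))/(k:ℝ))^k := by
    have h := choose_le_pow_three (m := N+k) hk
    have hc : ((N+k:ℕ):ℝ) = (N:ℝ)+(k:ℝ) := by push_cast; ring
    rwa [hc] at h
  have hstep : ((N + k).choose k : ℝ) * c1^k ≤ ρ^k := by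
    calc ((N + k).choose k : ℝ) * c1^k
        ≤ (3*((N:ℝ)+(k:ℝ))/(k:ℝ))^k * c1^k :=
          mul_le_mul_of_nonneg_right hchoose (by positivity)
      _ = ρ^k := by rw [← mul_pow, hρ]; congr 1; ring
  have hmain : (((N + k).choose k : ℝ))^d * (c1^d)^k ≤ (ρ^k)^d := by
    have he : (((N + k).choose k : ℝ))^d * (c1^d)^k
        = (((N + k).choose k : ℝ) * c1^k)^d := by
      rw [mul_pow, pow_right_comm]
    rw [he]
    exact pow_le_pow_left₀ (by positivity) hstep d
  refine hmain.trans ?_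
  have hρ9 : ρ ≤ 9*(N:ℝ)*c1 := by
    rw [hρ, div_le_iff₀ hkpos]
    have e1 : 3*((N:ℝ)+(k:ℝ))*c1 ≤ 9*(N:ℝ)*c1 := by
      nlinarith [mul_nonneg hc0 (sub_nonneg.mpr hk3R)]
    have e2 : 9*(N:ℝ)*c1 ≤ 9*(N:ℝ)*c1*(k:ℝ) := by
      nlinarith [mul_nonneg (mul_nonneg hc0 (by linarith : (0:ℝ) ≤ (N:ℝ)))
        (by linarith : (0:ℝ) ≤ (k:ℝ)-1)]
    linarith
  have hpeel : ρ^k ≤ (1/16:ℝ)^l * (9*(N:ℝ)*c1) := by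
    calc ρ^k = ρ^(k-1) * ρ := by
          rw [← pow_succ]
          congr 1
          omega
      _ ≤ (1/4:ℝ)^(k-1) * ρ :=
          mul_le_mul_of_nonneg_right (pow_le_pow_left₀ hρ0 hρ14 _) hρ0
      _ ≤ (1/4:ℝ)^(2*l) * ρ := by
          apply mul_le_mul_of_nonneg_right _ hρ0
          apply pow_le_pow_of_le_one (by norm_num) (by norm_num) (by omega)
      _ ≤ (1/16:ℝ)^l * (9*(N:ℝ)*c1) := by
          have h16 : (1/4:ℝ)^(2*l) = (1/16:ℝ)^l := by
            rw [pow_mul]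
            norm_num
          rw [h16]
          exact mul_le_mul_of_nonneg_left hρ9 (by positivity)
  calc (ρ^k)^d ≤ ((1/16:ℝ)^l * (9*(N:ℝ)*c1))^d :=
        pow_le_pow_left₀ (by positivity) hpeel d
    _ = (1/16:ℝ)^(d*l) * (9*(N:ℝ))^d * c1^d := by
        rw [mul_pow, ← pow_mul, mul_pow, mul_comm l d]
        ring


/-! ### analytic estimates -/
section Analytic
variable {f : ℝ → ℝ} {A : ℝ}

lemma intOn (hm : Antitone f) (h0 : ∀ x, 0 ≤ f x) (h1 : ∀ x, f x ≤ 1) (a b : ℝ) :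
    IntegrableOn f (Set.Ioc a b) volume := by
  refine Measure.integrableOn_of_bounded measure_Ioc_lt_top.ne
    hm.measurable.aestronglyMeasurable (M := 1) (ae_of_all _ (fun x => ?_))
  rw [Real.norm_eq_abs, abs_le]
  exact ⟨by linarith [h0 x], h1 x⟩

lemma const_le_int (hm : Antitone f) (h0 : ∀ x, 0 ≤ f x) (h1 : ∀ x, f x ≤ 1)
    {a b : ℝ} (hab : a ≤ b) : (b - a) * f b ≤ ∫ s in Set.Ioc a b, f s := by
  have h := setIntegral_mono_on
    (integrableOn_const measure_Ioc_lt_top.ne)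
    (intOn hm h0 h1 a b) measurableSet_Ioc (fun x hx => hm hx.2)
  rw [setIntegral_const, Real.volume_real_Ioc_of_le hab, smul_eq_mul] at h
  exact h

lemma int_nonneg (h0 : ∀ x, 0 ≤ f x) (a b : ℝ) :
    0 ≤ ∫ s in Set.Ioc a b, f s :=
  setIntegral_nonneg measurableSet_Ioc (fun x _ => h0 x)

variable (hm : Antitone f) (h0 : ∀ x, 0 ≤ f x) (h1 : ∀ x, f x ≤ 1)
  (hI : ∀ a b : ℝ, 0 ≤ a → ∫ s in Set.Ioc a b, f s ≤ A)

include hm h0 h1 hI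

lemma hA0 : 0 ≤ A := le_trans (int_nonneg h0 0 0) (hI 0 0 le_rfl)

/-- `t f(t) ≤ A` for `t ≥ 0`. -/
lemma key1 {t : ℝ} (ht : 0 ≤ t) : t * f t ≤ A := by
  have h := const_le_int hm h0 h1 ht
  simpa using h.trans (hI 0 t le_rfl)

/-- partial sums on arithmetic progressions. -/
lemma key2 {c : ℝ} (hc : 0 < c) (M : ℕ) :
    ∑ m ∈ Finset.Icc 1 M, c * f (c*m) ≤ A := by
  have main : ∀ M : ℕ, ∑ m ∈ Finset.Icc 1 M, c * f (c*m) ≤ ∫ s in Set.Ioc 0 (c*M), f s := by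
    intro M
    induction M with
    | zero => simp
    | succ M ih =>
      rw [Finset.sum_Icc_succ_top (by omega)]
      have hterm : c * f (c*(M+1)) ≤ ∫ s in Set.Ioc (c*M) (c*(M+1)), f s := by
        have h := const_le_int hm h0 h1 (by nlinarith : (c:ℝ)*M ≤ c*(M+1))
        have he : (c*((M:ℝ)+1) - c*M) = c := by ring
        rw [he] at h
        exact h
      have hunion : ∫ s in Set.Ioc 0 (c*(M+1):ℝ), f s
          = (∫ s in Set.Ioc 0 (c*(M:ℝ)), f s) + ∫ s in Set.Ioc (c*(M:ℝ)) (c*((M:ℝ)+1)), f s := by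
        rw [← setIntegral_union (Set.Ioc_disjoint_Ioc_of_le le_rfl) measurableSet_Ioc
          (intOn hm h0 h1 _ _) (intOn hm h0 h1 _ _),
          Set.Ioc_union_Ioc_eq_Ioc (by positivity) (by nlinarith)]
      push_cast
      push_cast at ih hterm hunion
      rw [hunion]
      linarith
  refine (main M).trans (hI _ _ le_rfl)

lemma key2' {c : ℝ} (hc : 0 < c) (M : ℕ) :
    ∑ m ∈ Finset.Ioc 1 M, f (c*m) ≤ A / c := by
  have h1' : ∑ m ∈ Finset.Ioc 1 M, c * f (c*m) ≤ A := by
    refine le_trans (Finset.sum_le_sum_of_subset_of_nonneg ?_ ?_) (key2 hm h0 h1 hI hc M)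
    · intro x hx
      rw [Finset.mem_Ioc] at hx
      rw [Finset.mem_Icc]
      omega
    · intro i _ _
      have := h0 (c*i)
      positivity
  rw [← Finset.mul_sum] at h1'
  rw [le_div_iff₀ hc, mul_comm]
  exact h1'

/-- dyadic sums. -/
lemma key3 {c : ℝ} (hc : 0 < c) (J : ℕ) :
    ∑ j ∈ Finset.range (J+1), (2:ℝ)^j * f (c*2^j) ≤ 3 * (A / c) := by
  have main : ∀ J : ℕ, ∑ j ∈ Finset.range (J+1), (2:ℝ)^j * f (c*2^j)
      ≤ f c + 2 * ∑ m ∈ (Finset.Ioc 1 (2^J) : Finset ℕ), f (c*m) := by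
    intro J
    induction J with
    | zero => simp
    | succ J ih =>
      rw [Finset.sum_range_succ]
      have hstep : (2:ℝ)^(J+1) * f (c*2^(J+1)) ≤ 2 * ∑ m ∈ (Finset.Ioc (2^J) (2^(J+1)) : Finset ℕ), f (c*m) := by
        have hcard : ((Finset.Ioc (2^J) (2^(J+1)) : Finset ℕ)).card = 2^J := by
          rw [Nat.card_Ioc]
          have : 2^(J+1) = 2 * 2^J := by ring
          omega
        have heach : ∀ m ∈ (Finset.Ioc (2^J) (2^(J+1)) : Finset ℕ), f (c*2^(J+1)) ≤ f (c*m) := by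
          intro m hm'
          rw [Finset.mem_Ioc] at hm'
          apply hm
          have : (m:ℝ) ≤ (2:ℝ)^(J+1) := by exact_mod_cast hm'.2.trans_eq (by push_cast; ring)
          nlinarith
        have hlb := Finset.card_nsmul_le_sum _ _ _ heach
        rw [hcard, nsmul_eq_mul] at hlb
        have hcast : ((2^J : ℕ) : ℝ) = (2:ℝ)^J := by push_cast; ring
        rw [hcast] at hlb
        calc (2:ℝ)^(J+1) * f (c*2^(J+1)) = 2 * ((2:ℝ)^J * f (c*2^(J+1))) := by ring
          _ ≤ 2 * ∑ m ∈ (Finset.Ioc (2^J) (2^(J+1)) : Finset ℕ), f (c*m) := by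
              linarith [hlb]
      have hsplit : ∑ m ∈ (Finset.Ioc 1 (2^J) : Finset ℕ), f (c*m) + ∑ m ∈ (Finset.Ioc (2^J) (2^(J+1)) : Finset ℕ), f (c*m)
          = ∑ m ∈ (Finset.Ioc 1 (2^(J+1)) : Finset ℕ), f (c*m) :=
        Finset.sum_Ioc_consecutive _ Nat.one_le_two_pow
          (Nat.pow_le_pow_right (by norm_num) (by omega))
      linarith
  have hfc : f c ≤ A / c := by
    rw [le_div_iff₀ hc]
    have := key1 hm h0 h1 hI hc.le
    linarith
  have h2 := key2' hm h0 h1 hI hc (2^J)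
  have := main J
  linarith

/-- claim E : dyadic sums of `(2^j)^d f(c 2^j)^d`. -/
lemma keyE (hd : 1 ≤ d) {c : ℝ} (hc : 0 < c) (J : ℕ) :
    ∑ j ∈ Finset.range (J+1), ((2:ℝ)^j)^d * (f (c*2^j))^d ≤ 3 * (A / c)^d := by
  have hAc : 0 ≤ A / c := by
    have := hA0 hm h0 h1 hI
    positivity
  have haj : ∀ j : ℕ, 0 ≤ (2:ℝ)^j * f (c*2^j) ∧ (2:ℝ)^j * f (c*2^j) ≤ A / c := by
    intro j
    constructor
    · have := h0 (c*2^j); positivity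
    · rw [le_div_iff₀ hc]
      have h := key1 hm h0 h1 hI (t := c*2^j) (by positivity)
      calc (2:ℝ)^j * f (c*2^j) * c = (c*2^j) * f (c*2^j) := by ring
        _ ≤ A := h
  calc ∑ j ∈ Finset.range (J+1), ((2:ℝ)^j)^d * (f (c*2^j))^d
      = ∑ j ∈ Finset.range (J+1), ((2:ℝ)^j * f (c*2^j))^(d-1) * ((2:ℝ)^j * f (c*2^j)) := by
        refine Finset.sum_congr rfl (fun j _ => ?_)
        rw [← mul_pow, ← pow_succ]
        congr 1
        omega
    _ ≤ ∑ j ∈ Finset.range (J+1), (A/c)^(d-1) * ((2:ℝ)^j * f (c*2^j)) := by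
        refine Finset.sum_le_sum (fun j _ => ?_)
        exact mul_le_mul_of_nonneg_right
          (pow_le_pow_left₀ (haj j).1 (haj j).2 _) (haj j).1
    _ = (A/c)^(d-1) * ∑ j ∈ Finset.range (J+1), ((2:ℝ)^j * f (c*2^j)) := by
        rw [Finset.mul_sum]
    _ ≤ (A/c)^(d-1) * (3 * (A/c)) := by
        apply mul_le_mul_of_nonneg_left (key3 hm h0 h1 hI hc J) (by positivity)
    _ = 3 * (A/c)^((d-1)+1) := by rw [pow_succ]; ring
    _ = 3 * (A/c)^d := by congr 2; omega

/-- level sums for the deterministic lemma. -/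
lemma keyLev {c : ℝ} (hc : 0 < c) (L : ℕ) :
    ∑ l ∈ Finset.Icc 1 L, (c/2^l) * f (c/2^l) ≤ 2 * A := by
  have main : ∀ L : ℕ, ∑ l ∈ Finset.Icc 1 L, (c/2^l) * f (c/2^l)
      ≤ 2 * ∫ s in Set.Ioc (c/2^(L+1)) (c/2), f s := by
    intro L
    induction L with
    | zero => simp [int_nonneg h0]
    | succ L ih =>
      rw [Finset.sum_Icc_succ_top (by omega)]
      have hterm : (c/2^(L+1)) * f (c/2^(L+1))
          ≤ 2 * ∫ s in Set.Ioc (c/2^(L+2)) (c/2^(L+1)), f s := by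
        have hle : c/2^(L+2) ≤ c/2^(L+1) := by
          apply div_le_div_of_nonneg_left hc.le (by positivity)
          apply pow_le_pow_right₀ (by norm_num) (by omega)
        have h := const_le_int hm h0 h1 hle
        have he : (c/2^(L+1) - c/2^(L+2)) = (c/2^(L+2)) := by
          rw [pow_succ]
          field_simp
          ring
        rw [he] at h
        have he2 : (c/2^(L+1)) * f (c/2^(L+1)) = 2 * ((c/2^(L+2)) * f (c/2^(L+1))) := by
          rw [pow_succ]
          field_simp
          ring
        rw [he2]
        linarith
      have hdiv : ∀ u v : ℕ, u ≤ v → c/2^v ≤ c/2^u := by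
        intro u v huv
        apply div_le_div_of_nonneg_left hc.le (by positivity)
        exact pow_le_pow_right₀ (by norm_num) huv
      have hc2 : c/2 = c/2^1 := by norm_num
      have hunion : (∫ s in Set.Ioc (c/2^(L+2)) (c/2^(L+1)), f s)
          + ∫ s in Set.Ioc (c/2^(L+1)) (c/2), f s
          = ∫ s in Set.Ioc (c/2^(L+2)) (c/2), f s := by
        rw [← setIntegral_union (Set.Ioc_disjoint_Ioc_of_le le_rfl) measurableSet_Ioc
          (intOn hm h0 h1 _ _) (intOn hm h0 h1 _ _),
          Set.Ioc_union_Ioc_eq_Ioc (hdiv _ _ (by omega)) (by rw [hc2]; exact hdiv _ _ (by omega))]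
      linarith
  refine (main L).trans ?_
  have := hI (c/2^(L+1)) (c/2) (by positivity)
  linarith


end Analytic

/-! ### auxiliary summation lemmas -/

lemma keyE_finset {f : ℝ → ℝ} {A : ℝ} {d : ℕ} (hm : Antitone f) (h0 : ∀ x, 0 ≤ f x)
    (h1 : ∀ x, f x ≤ 1) (hI : ∀ a b : ℝ, 0 ≤ a → ∫ s in Set.Ioc a b, f s ≤ A)
    (hd : 1 ≤ d) {c : ℝ} (hc : 0 < c) (s : Finset ℕ) :
    ∑ j ∈ s, ((2:ℝ)^j)^d * (f (c*2^j))^d ≤ 3 * (A / c)^d := by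
  obtain ⟨J, hJ⟩ := s.exists_nat_subset_range
  have hsub : s ⊆ Finset.range (J+1) :=
    hJ.trans (Finset.range_subset_range.mpr (by omega))
  refine le_trans (Finset.sum_le_sum_of_subset_of_nonneg hsub (fun j _ _ => ?_)) ?_
  · have := h0 (c*2^j)
    positivity
  · exact keyE hm h0 h1 hI hd hc J

lemma tsum_ofReal_le {g : ℕ → ℝ} (hg : ∀ j, 0 ≤ g j) {B : ℝ}
    (h : ∀ s : Finset ℕ, ∑ j ∈ s, g j ≤ B) :
    ∑' j, ENNReal.ofReal (g j) ≤ ENNReal.ofReal B := by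
  rw [ENNReal.tsum_eq_iSup_sum]
  refine iSup_le (fun s => ?_)
  rw [← ENNReal.ofReal_sum_of_nonneg (fun j _ => hg j)]
  exact ENNReal.ofReal_le_ofReal (h s)

lemma gsum8_range : ∀ L : ℕ, ∑ l ∈ Finset.range L, (1/8:ℝ)^l ≤ 2 := by
  intro L
  induction L with
  | zero => norm_num
  | succ L ih =>
    rw [geom_sum_eq (by norm_num : (1/8:ℝ) ≠ 1)]
    have h1 : (0:ℝ) ≤ (1/8:ℝ)^(L+1) := by positivity
    rw [div_le_iff_of_neg (by norm_num : (1/8:ℝ)-1 < 0)]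
    nlinarith

lemma gsum8 (s : Finset ℕ) : ∑ l ∈ s, (1/8:ℝ)^l ≤ 2 := by
  obtain ⟨L, hL⟩ := s.exists_nat_subset_range
  refine le_trans (Finset.sum_le_sum_of_subset_of_nonneg hL (fun l _ _ => by positivity)) ?_
  exact gsum8_range L

lemma two_mul_le_two_pow {j : ℕ} (hj : 6 ≤ j) : 2*j ≤ 2^j := by
  induction j with
  | zero => omega
  | succ j ih =>
    rcases Nat.lt_or_ge j 6 with h | h
    · have hj7 : j = 5 := by omega
      subst hj7
      norm_num
    · have h2 : 2 ≤ 2^j := by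
        calc 2 = 2^1 := rfl
        _ ≤ 2^j := Nat.pow_le_pow_right (by norm_num) (by omega)
      have := ih (by omega)
      rw [pow_succ]
      omega

/-! ### the main argument -/

def qr (F : ℝ → ℝ) (t : ℝ) : ℝ := 1 - (ENNReal.ofReal (F t)).toReal

def qp (F : ℝ → ℝ) (d : ℕ) (t : ℝ) : ℝ := qr F t ^ ((1:ℝ)/d)

def kap (F : ℝ → ℝ) (d : ℕ) (A : ℝ) (j l : ℕ) : ℕ :=
  ⌈(32:ℝ) * (2:ℝ)^j * qp F d (tlev A (2^j) l)⌉₊ + 2*l + 1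

def badSet {Ω : Type} {d : ℕ} (X : (Fin d → ℕ) → Ω → ℝ) (F : ℝ → ℝ) (A : ℝ) (j : ℕ) :
    Set Ω :=
  {ω | Chain d (2^j) 1 (A * 2^j) (fun v => X v ω)} ∪
    ⋃ l ∈ Finset.Icc 1 (j-5),
      {ω | Chain d (2^j) (kap F d A j l) (tlev A (2^j) l) (fun v => X v ω)}

section MainArg

variable {Ω : Type} [MeasurableSpace Ω] {P : Measure Ω} [IsProbabilityMeasure P]
  {X : (Fin d → ℕ) → Ω → ℝ} {F : ℝ → ℝ}

lemma qr1 (F : ℝ → ℝ) (t : ℝ) : qr F t ≤ 1 := by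
  unfold qr
  have := ENNReal.toReal_nonneg (a := ENNReal.ofReal (F t))
  linarith

lemma qr0 (hF : ∀ z s, P {ω | X z ω ≤ s} = ENNReal.ofReal (F s)) (t : ℝ) :
    0 ≤ qr F t := by
  have h1 : ENNReal.ofReal (F t) ≤ 1 := by
    rw [← hF (fun _ => 0) t]
    exact prob_le_one
  have h2 : (ENNReal.ofReal (F t)).toReal ≤ 1 := by
    calc (ENNReal.ofReal (F t)).toReal ≤ (1:ℝ≥0∞).toReal :=
      ENNReal.toReal_mono (by norm_num) h1
    _ = 1 := by norm_num
  unfold qr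
  linarith

lemma qr_anti (hF : ∀ z s, P {ω | X z ω ≤ s} = ENNReal.ofReal (F s)) :
    Antitone (qr F) := by
  intro t t' htt
  unfold qr
  have h1 : ENNReal.ofReal (F t) ≤ ENNReal.ofReal (F t') := by
    rw [← hF (fun _ => 0) t, ← hF (fun _ => 0) t']
    apply measure_mono
    intro ω hω
    exact le_trans hω htt
  have := ENNReal.toReal_mono ENNReal.ofReal_ne_top h1
  linarith

lemma qr_le_one_sub (F : ℝ → ℝ) (t : ℝ) : qr F t ≤ 1 - F t := by
  unfold qr
  have h : (ENNReal.ofReal (F t)).toReal = max (F t) 0 := ENNReal.toReal_ofReal'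
  rw [h]
  have := le_max_left (F t) 0
  linarith

lemma ofReal_qr (hF : ∀ z s, P {ω | X z ω ≤ s} = ENNReal.ofReal (F s)) (t : ℝ) :
    1 - ENNReal.ofReal (F t) = ENNReal.ofReal (qr F t) := by
  have h1 : ENNReal.ofReal (F t) ≤ 1 := by
    rw [← hF (fun _ => 0) t]; exact prob_le_one
  unfold qr
  rw [ENNReal.ofReal_sub _ ENNReal.toReal_nonneg, ENNReal.ofReal_one,
    ENNReal.ofReal_toReal ENNReal.ofReal_ne_top]

variable (hdd : 1 ≤ d)
  (hmeas : ∀ z, Measurable (X z)) (hind : iIndepFun X P)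
  (hF : ∀ z s, P {ω | X z ω ≤ s} = ENNReal.ofReal (F s))
  (hInt : IntegrableOn (fun s => (1 - F s) ^ ((1 : ℝ) / d)) (Set.Ici 0) volume)

include hdd hF

lemma qp0 (t : ℝ) : 0 ≤ qp F d t := by
  unfold qp
  exact Real.rpow_nonneg (qr0 hF t) _

lemma qp1 (t : ℝ) : qp F d t ≤ 1 := by
  unfold qp
  exact Real.rpow_le_one (qr0 hF t) (qr1 F t) (by positivity)

lemma qp_anti : Antitone (qp F d) := by
  intro t t' htt
  unfold qp
  exact Real.rpow_le_rpow (qr0 hF t') (qr_anti hF htt) (by positivity)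

lemma qp_pow (t : ℝ) : (qp F d t)^d = qr F t := by
  unfold qp
  rw [one_div]
  exact Real.rpow_inv_natCast_pow (qr0 hF t) (by omega)

lemma qp_le (t : ℝ) : qp F d t ≤ (1 - F t) ^ ((1:ℝ)/d) :=
  Real.rpow_le_rpow (qr0 hF t) (qr_le_one_sub F t) (by positivity)

include hInt

lemma qpI {A : ℝ} (hIA : (∫ s in Set.Ici (0:ℝ), (1 - F s) ^ ((1:ℝ)/d)) ≤ A) :
    ∀ a b : ℝ, 0 ≤ a → ∫ s in Set.Ioc a b, qp F d s ≤ A := by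
  intro a b ha
  have h1 : ∫ s in Set.Ioc a b, qp F d s ≤ ∫ s in Set.Ioc a b, (1 - F s) ^ ((1:ℝ)/d) := by
    apply setIntegral_mono_on
    · exact intOn (qp_anti hdd hF) (qp0 hdd hF) (qp1 hdd hF) a b
    · exact hInt.mono_set (fun x hx => le_trans ha hx.1.le)
    · exact measurableSet_Ioc
    · exact fun x _ => qp_le hdd hF x
  have h2 : ∫ s in Set.Ioc a b, (1 - F s) ^ ((1:ℝ)/d)
      ≤ ∫ s in Set.Ici (0:ℝ), (1 - F s) ^ ((1:ℝ)/d) := by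
    apply setIntegral_mono_set hInt
    · refine ae_of_all _ (fun x => Real.rpow_nonneg ?_ _)
      have h1 : ENNReal.ofReal (F x) ≤ 1 := by
        rw [← hF (fun _ => 0) x]; exact prob_le_one
      have h2 := ENNReal.ofReal_le_one.mp h1
      linarith
    · exact HasSubset.Subset.eventuallyLE (fun x hx => le_trans ha hx.1.le)
  linarith

variable {A : ℝ}

omit hdd hInt in
lemma Inonneg : 0 ≤ ∫ s in Set.Ici (0:ℝ), (1 - F s) ^ ((1:ℝ)/d) := by
  apply setIntegral_nonneg measurableSet_Ici
  intro x _
  apply Real.rpow_nonneg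
  have h1 : ENNReal.ofReal (F x) ≤ 1 := by
    rw [← hF (fun _ => 0) x]; exact prob_le_one
  have h2 := ENNReal.ofReal_le_one.mp h1
  linarith

include hmeas hind

omit hdd hInt in
lemma meas_cap (hIA : (∫ s in Set.Ici (0:ℝ), (1 - F s) ^ ((1:ℝ)/d)) < A) (j : ℕ) :
    P {ω | Chain d (2^j) 1 (A * 2^j) (fun v => X v ω)}
      ≤ ENNReal.ofReal ((2*(2:ℝ)^j)^d * qr F (A * 2^j)) := by
  refine le_trans (meas_chain_le hmeas hind hF (2^j) 1 (A*2^j)) ?_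
  rw [ofReal_qr hF, Nat.choose_one_right, pow_one]
  have hcast : ((2^j + 1 : ℕ) : ℝ≥0∞) = ENNReal.ofReal (((2^j + 1 : ℕ) : ℝ)) := by
    rw [ENNReal.ofReal_natCast]
  rw [hcast, ← ENNReal.ofReal_pow (by positivity), ← ENNReal.ofReal_mul (by positivity)]
  apply ENNReal.ofReal_le_ofReal
  apply mul_le_mul_of_nonneg_right _ (qr0 hF _)
  apply pow_le_pow_left₀ (by positivity)
  push_cast
  have h1 : (1:ℝ) ≤ 2^j := one_le_pow₀ (by norm_num)
  linarith

lemma meas_lev (hIA : (∫ s in Set.Ici (0:ℝ), (1 - F s) ^ ((1:ℝ)/d)) < A)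
    {j l : ℕ} (hl : l ∈ Finset.Icc 1 (j-5)) :
    P {ω | Chain d (2^j) (kap F d A j l) (tlev A (2^j) l) (fun v => X v ω)}
      ≤ ENNReal.ofReal ((1/16:ℝ)^(d*l) * (9*(2:ℝ)^j)^d * qr F (tlev A (2^j) l)) := by
  have hmem := Finset.mem_Icc.mp hl
  have hj : 6 ≤ j := by omega
  have hAp : 0 < A := lt_of_le_of_lt (Inonneg hF) hIA
  set t := tlev A (2^j) l with ht
  set c1 := qp F d t with hc1def
  set k := kap F d A j l with hk
  have htpos : 0 < t := tlev_pos hAp (pow_pos (by norm_num) j)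
  have hc0 : 0 ≤ c1 := qp0 hdd hF t
  have hc116 : c1 ≤ 1/32 := by
    have hkey := key1 (qp_anti hdd hF) (qp0 hdd hF) (qp1 hdd hF)
      (qpI hdd hF hInt hIA.le) htpos.le
    have h1 : c1 ≤ A / t := by
      rw [le_div_iff₀ htpos]
      linarith [hkey]
    have h2 : A / t = (2:ℝ)^l / (2:ℝ)^j := by
      rw [ht, tlev_cast]
      have hj0 : ((2:ℝ))^j ≠ 0 := by positivity
      have hl0 : ((2:ℝ))^l ≠ 0 := by positivity
      field_simp
    have h3 : (2:ℝ)^l / (2:ℝ)^j ≤ 1/32 := by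
      rw [div_le_div_iff₀ (by positivity) (by norm_num)]
      have he : (2:ℝ)^l * 32 = 2^(l+5) := by rw [pow_add]; norm_num
      rw [he, one_mul]
      exact pow_le_pow_right₀ (by norm_num) (by omega)
    linarith
  have hkceil : (32:ℝ) * (2:ℝ)^j * c1 ≤ (⌈(32:ℝ) * (2:ℝ)^j * c1⌉₊ : ℝ) := Nat.le_ceil _
  have hceil_le : ⌈(32:ℝ) * (2:ℝ)^j * c1⌉₊ ≤ 2^j := by
    rw [Nat.ceil_le]
    have : (32:ℝ) * (2:ℝ)^j * c1 ≤ (2:ℝ)^j := by nlinarith [pow_pos (by norm_num : (0:ℝ) < 2) j]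
    calc (32:ℝ) * (2:ℝ)^j * c1 ≤ (2:ℝ)^j := this
      _ = ((2^j : ℕ) : ℝ) := by push_cast; ring
  have h2l : 2*l+1 ≤ 2^j := by
    have := two_mul_le_two_pow hj
    omega
  have hk3 : k ≤ 2*(2^j) := by
    rw [hk]
    unfold kap
    rw [← ht, ← hc1def]
    omega
  have hk1R : 32 * ((2^j : ℕ):ℝ) * c1 ≤ (k:ℝ) := by
    rw [hk]
    unfold kap
    rw [← ht, ← hc1def]
    push_cast
    linarith [hkceil]
  have hk2 : 2*l+1 ≤ k := by
    rw [hk]; unfold kap; omega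
  -- apply probability bound
  refine le_trans (meas_chain_le hmeas hind hF (2^j) k t) ?_
  rw [ofReal_qr hF]
  have hcast : (((2^j + k).choose k : ℕ) : ℝ≥0∞)
      = ENNReal.ofReal (((2^j + k).choose k : ℕ) : ℝ) := by
    rw [ENNReal.ofReal_natCast]
  rw [hcast, ← ENNReal.ofReal_pow (by positivity),
    ← ENNReal.ofReal_pow (qr0 hF _), ← ENNReal.ofReal_mul (by positivity)]
  apply ENNReal.ofReal_le_ofReal
  have hqr : qr F t = c1^d := (qp_pow hdd hF t).symm
  have hlb := level_prob_bound (d := d) (N := 2^j) (k := k) (l := l) (c1 := c1)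
    hc0 hc116 hk1R hk2 hk3
  rw [hqr]
  have hNcast : ((2^j : ℕ) : ℝ) = (2:ℝ)^j := by push_cast; ring
  calc (((2^j + k).choose k : ℕ) : ℝ)^d * (c1^d)^k
      ≤ (1/16:ℝ)^(d*l) * (9*((2^j : ℕ):ℝ))^d * c1^d := hlb
    _ = (1/16:ℝ)^(d*l) * (9*(2:ℝ)^j)^d * c1^d := by rw [hNcast]

lemma bc_sum (hIA : (∫ s in Set.Ici (0:ℝ), (1 - F s) ^ ((1:ℝ)/d)) < A) :
    (∑' j, P (badSet X F A j)) ≠ ⊤ := by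
  classical
  have hAp : 0 < A := lt_of_le_of_lt (Inonneg hF) hIA
  set gcap : ℕ → ℝ := fun j => (2*(2:ℝ)^j)^d * qr F (A * 2^j) with hgcap
  set glev : ℕ → ℕ → ℝ := fun j l =>
    if 1 ≤ l ∧ l ≤ j-5 then (1/16:ℝ)^(d*l) * (9*(2:ℝ)^j)^d * qr F (tlev A (2^j) l) else 0
    with hglev
  have hglev0 : ∀ j l, 0 ≤ glev j l := by
    intro j l
    rw [hglev]
    dsimp only
    split
    · have := qr0 hF (tlev A (2^j) l)
      positivity
    · exact le_refl 0
  have hgcap0 : ∀ j, 0 ≤ gcap j := by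
    intro j
    have := qr0 hF (A * 2^j)
    rw [hgcap]
    positivity
  -- single-scale bound
  have hbad : ∀ j, P (badSet X F A j)
      ≤ ENNReal.ofReal (gcap j) + ∑' l, ENNReal.ofReal (glev j l) := by
    intro j
    refine le_trans (measure_union_le _ _) (add_le_add (meas_cap hmeas hind hF hIA j) ?_)
    refine le_trans (measure_biUnion_finset_le _ _) ?_
    have hterm : ∀ l ∈ Finset.Icc 1 (j-5),
        P {ω | Chain d (2^j) (kap F d A j l) (tlev A (2^j) l) (fun v => X v ω)}
        ≤ ENNReal.ofReal (glev j l) := by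
      intro l hl
      have hmem := Finset.mem_Icc.mp hl
      have : glev j l = (1/16:ℝ)^(d*l) * (9*(2:ℝ)^j)^d * qr F (tlev A (2^j) l) := by
        rw [hglev]
        dsimp only
        rw [if_pos ⟨hmem.1, hmem.2⟩]
      rw [this]
      exact meas_lev hdd hmeas hind hF hInt hIA hl
    refine le_trans (Finset.sum_le_sum hterm) ?_
    exact ENNReal.sum_le_tsum _
  -- summability of the cap part
  have hcap_sum : ∑' j, ENNReal.ofReal (gcap j) ≤ ENNReal.ofReal ((2:ℝ)^d * 3) := by
    apply tsum_ofReal_le hgcap0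
    intro s
    have hrw : ∀ j ∈ s, gcap j = (2:ℝ)^d * (((2:ℝ)^j)^d * (qp F d (A*2^j))^d) := by
      intro j _
      rw [hgcap]
      dsimp only
      rw [qp_pow hdd hF, mul_pow]
      ring
    rw [Finset.sum_congr rfl hrw, ← Finset.mul_sum]
    have hE := keyE_finset (qp_anti hdd hF) (qp0 hdd hF) (qp1 hdd hF)
      (qpI hdd hF hInt hIA.le) hdd hAp s
    rw [div_self hAp.ne', one_pow, mul_one] at hE
    calc (2:ℝ)^d * ∑ j ∈ s, ((2:ℝ)^j)^d * (qp F d (A*2^j))^d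
        ≤ (2:ℝ)^d * 3 := mul_le_mul_of_nonneg_left hE (by positivity)
      _ = (2:ℝ)^d * 3 := rfl
  -- summability of the level part
  have hlev_sum : ∑' (l:ℕ), ∑' j, ENNReal.ofReal (glev j l)
      ≤ ENNReal.ofReal (3*9^d*2) := by
    have hinner : ∀ l, ∑' j, ENNReal.ofReal (glev j l)
        ≤ ENNReal.ofReal ((1/8:ℝ)^l * (9^d*3)) := by
      intro l
      apply tsum_ofReal_le (fun j => hglev0 j l)
      intro s
      by_cases hl1 : 1 ≤ l
      · have hrw : ∀ j ∈ s, glev j l = if l ≤ j - 5 then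
            (1/16:ℝ)^(d*l) * (9*(2:ℝ)^j)^d * qr F (tlev A (2^j) l) else 0 := by
          intro j _
          rw [hglev]
          dsimp only
          by_cases h : l ≤ j-5
          · rw [if_pos ⟨hl1, h⟩, if_pos h]
          · rw [if_neg (by tauto), if_neg h]
        rw [Finset.sum_congr rfl hrw, ← Finset.sum_filter]
        set s' := s.filter (fun j => l ≤ j - 5) with hs'
        have hrw2 : ∀ j ∈ s', (1/16:ℝ)^(d*l) * (9*(2:ℝ)^j)^d * qr F (tlev A (2^j) l)
            = ((1/16:ℝ)^(d*l) * 9^d) * (((2:ℝ)^j)^d * (qp F d ((A/2^l) * 2^j))^d) := by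
          intro j _
          have htl : tlev A (2^j) l = (A/2^l) * 2^j := by
            rw [tlev_cast]; ring
          rw [htl, qp_pow hdd hF, mul_pow 9]
          ring
        rw [Finset.sum_congr rfl hrw2, ← Finset.mul_sum]
        have hc : (0:ℝ) < A/2^l := by positivity
        have hE := keyE_finset (qp_anti hdd hF) (qp0 hdd hF) (qp1 hdd hF)
          (qpI hdd hF hInt hIA.le) hdd hc s'
        have hAc : A / (A/2^l) = (2:ℝ)^l := by
          field_simp
        rw [hAc] at hE
        have hE2 : ∑ j ∈ s', ((2:ℝ)^j)^d * (qp F d ((A/2^l) * 2^j))^d ≤ 3 * ((2:ℝ)^l)^d := hE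
        calc ((1/16:ℝ)^(d*l) * 9^d) * ∑ j ∈ s', (((2:ℝ)^j)^d * (qp F d ((A/2^l) * 2^j))^d)
            ≤ ((1/16:ℝ)^(d*l) * 9^d) * (3 * ((2:ℝ)^l)^d) :=
              mul_le_mul_of_nonneg_left hE2 (by positivity)
          _ = ((1/16:ℝ)^(l*d) * ((2:ℝ)^l)^d) * (9^d*3) := by rw [mul_comm d l]; ring
          _ ≤ (1/8:ℝ)^l * (9^d*3) := by
              apply mul_le_mul_of_nonneg_right _ (by positivity)
              have h1 : (1/16:ℝ)^(l*d) * ((2:ℝ)^l)^d = ((1/8:ℝ)^l)^d := by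
                rw [pow_mul, ← mul_pow, ← mul_pow]
                norm_num
              rw [h1]
              calc ((1/8:ℝ)^l)^d ≤ ((1/8:ℝ)^l)^1 :=
                    pow_le_pow_of_le_one (by positivity)
                      (pow_le_one₀ (by norm_num) (by norm_num)) hdd
                _ = (1/8:ℝ)^l := pow_one _
      · have hz : ∀ j ∈ s, glev j l = 0 := by
          intro j _
          rw [hglev]
          dsimp only
          rw [if_neg (by omega)]
        rw [Finset.sum_congr rfl hz, Finset.sum_const, smul_zero]
        positivity
    refine le_trans (ENNReal.tsum_le_tsum hinner) ?_
    apply tsum_ofReal_le (fun l => by positivity)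
    intro s
    have hr : ∀ l ∈ s, (1/8:ℝ)^l * (9^d*3) = (9^d*3) * (1/8)^l := fun l _ => by ring
    rw [Finset.sum_congr rfl hr, ← Finset.mul_sum]
    calc ((9:ℝ)^d*3) * ∑ l ∈ s, (1/8:ℝ)^l ≤ ((9:ℝ)^d*3) * 2 :=
          mul_le_mul_of_nonneg_left (gsum8 s) (by positivity)
      _ = 3*9^d*2 := by ring
  have htot : (∑' j, P (badSet X F A j))
      ≤ ENNReal.ofReal ((2:ℝ)^d * 3) + ENNReal.ofReal (3*9^d*2) := by
    calc ∑' j, P (badSet X F A j)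
        ≤ ∑' j, (ENNReal.ofReal (gcap j) + ∑' l, ENNReal.ofReal (glev j l)) :=
          ENNReal.tsum_le_tsum hbad
      _ = (∑' j, ENNReal.ofReal (gcap j)) + ∑' j, ∑' l, ENNReal.ofReal (glev j l) :=
          ENNReal.tsum_add
      _ = (∑' j, ENNReal.ofReal (gcap j)) + ∑' l, ∑' j, ENNReal.ofReal (glev j l) := by
          rw [ENNReal.tsum_comm]
      _ ≤ _ := add_le_add hcap_sum hlev_sum
  exact ne_top_of_le_ne_top
    (ENNReal.add_ne_top.mpr ⟨ENNReal.ofReal_ne_top, ENNReal.ofReal_ne_top⟩) htot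

lemma main_eventually (hIA : (∫ s in Set.Ici (0:ℝ), (1 - F s) ^ ((1:ℝ)/d)) < A) :
    ∀ᵐ ω ∂P, ∀ᶠ n : ℕ in atTop,
      0 ≤ (n:ℝ)⁻¹ * sSup {t : ℝ | ∃ z : Fin d → ℕ, (∑ i, z i) ≤ n ∧ t = lastPassage X z ω} ∧
      (n:ℝ)⁻¹ * sSup {t : ℝ | ∃ z : Fin d → ℕ, (∑ i, z i) ≤ n ∧ t = lastPassage X z ω}
        ≤ 404 * A := by
  have hAp : 0 < A := lt_of_le_of_lt (Inonneg hF) hIA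
  filter_upwards [ae_eventually_notMem (bc_sum hdd hmeas hind hF hInt hIA)] with ω hω
  rw [eventually_atTop] at hω
  obtain ⟨J₀, hJ₀⟩ := hω
  rw [eventually_atTop]
  refine ⟨2^(max J₀ 6), fun n hn => ?_⟩
  have hn0 : n ≠ 0 := by
    have h1 : 1 ≤ 2^(max J₀ 6) := Nat.one_le_two_pow
    omega
  set j := Nat.log 2 n with hj
  have hjn : 2^j ≤ n := Nat.pow_log_le_self 2 hn0
  have hnj : n < 2^(j+1) := Nat.lt_pow_succ_log_self (by norm_num) n
  have hjm : max J₀ 6 ≤ j := by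
    rw [hj]
    exact (Nat.le_log_iff_pow_le (by norm_num) hn0).mpr hn
  have hgood : ω ∉ badSet X F A (j+1) := hJ₀ (j+1) (by omega)
  rw [badSet, Set.mem_union] at hgood
  push_neg at hgood
  obtain ⟨hcap, hlev'⟩ := hgood
  have hlev : ∀ l ∈ Finset.Icc 1 ((j+1)-5),
      ¬ Chain d (2^(j+1)) (kap F d A (j+1) l) (tlev A (2^(j+1)) l) (fun v => X v ω) := by
    intro l hl hch
    exact hlev' (Set.mem_biUnion hl hch)
  have hzbound : ∀ z : Fin d → ℕ, (∑ i, z i) ≤ n →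
      lastPassage X z ω ≤ 202 * A * 2^(j+1) := by
    intro z hz
    apply lastPassage_le X z ω (by positivity)
    intro p hp
    refine det_pathsum_le hAp (by omega : 6 ≤ j+1) (fun v => X v ω)
      (fun l => qp F d (tlev A (2^(j+1)) l)) (fun l => qp0 hdd hF _) hcap ?_ ?_ (by omega) hp
    · intro l hl
      have h := hlev l hl
      unfold kap at h
      exact h
    · exact keyLev (qp_anti hdd hF) (qp0 hdd hF) (qp1 hdd hF) (qpI hdd hF hInt hIA.le)
        (c := A * ((2^(j+1) : ℕ):ℝ)) (by positivity) ((j+1)-5)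
  have hmem0 : (0:ℝ) ∈ {t : ℝ | ∃ z : Fin d → ℕ, (∑ i, z i) ≤ n ∧ t = lastPassage X z ω} :=
    ⟨fun _ => 0, by simp, (lastPassage_zero X ω).symm⟩
  have hbdd : BddAbove {t : ℝ | ∃ z : Fin d → ℕ, (∑ i, z i) ≤ n ∧ t = lastPassage X z ω} := by
    refine ⟨202 * A * 2^(j+1), ?_⟩
    rintro t ⟨z, hz, rfl⟩
    exact hzbound z hz
  have hS0 : 0 ≤ sSup {t : ℝ | ∃ z : Fin d → ℕ, (∑ i, z i) ≤ n ∧ t = lastPassage X z ω} :=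
    le_csSup hbdd hmem0
  have hSle : sSup {t : ℝ | ∃ z : Fin d → ℕ, (∑ i, z i) ≤ n ∧ t = lastPassage X z ω}
      ≤ 202 * A * 2^(j+1) := by
    apply Real.sSup_le _ (by positivity)
    rintro t ⟨z, hz, rfl⟩
    exact hzbound z hz
  have hnpos : (0:ℝ) < n := by
    have : 0 < n := by omega
    exact_mod_cast this
  constructor
  · exact mul_nonneg (by positivity) hS0
  · have h2j : ((2:ℝ))^(j+1) ≤ 2*(n:ℝ) := by
      have : ((2^j : ℕ) : ℝ) ≤ (n:ℝ) := by exact_mod_cast hjn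
      push_cast at this
      rw [pow_succ]
      linarith
    have hfin : sSup {t : ℝ | ∃ z : Fin d → ℕ, (∑ i, z i) ≤ n ∧ t = lastPassage X z ω}
        ≤ 404 * A * n := by
      refine hSle.trans ?_
      nlinarith
    rw [inv_mul_le_iff₀ hnpos]
    linarith [hfin]

end MainArg

end DirPerc
end

noncomputable section
open DirPerc

/-- Lemma 3.5(ii): there is `c = c(d) < ∞` such that for every weight distribution `F`
with `∫₀^∞ (1 - F(s))^{1/d} ds < ∞`, almost surely
`limsup_n n⁻¹ max_{‖z‖ ≤ n} T(z) ≤ c ∫₀^∞ (1 - F(s))^{1/d} ds`. -/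
theorem directed_percolation_limsup_bound (d : ℕ) (hd : 2 ≤ d) :
    ∃ c : ℝ, ∀ (Ω : Type) [MeasurableSpace Ω] (P : Measure Ω) [IsProbabilityMeasure P]
      (X : (Fin d → ℕ) → Ω → ℝ) (F : ℝ → ℝ), IID X P F →
      IntegrableOn (fun s => (1 - F s) ^ ((1 : ℝ) / d)) (Set.Ici 0) volume →
      ∀ᵐ ω ∂P,
        Filter.limsup
          (fun n : ℕ => (n : ℝ)⁻¹ *
            sSup {t : ℝ | ∃ z : Fin d → ℕ, (∑ i, z i) ≤ n ∧ t = lastPassage X z ω}) atTop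
          ≤ c * ∫ s in Set.Ici (0 : ℝ), (1 - F s) ^ ((1 : ℝ) / d) := by
  refine ⟨404, ?_⟩
  intro Ω _ P _ X F hIID hInt
  obtain ⟨hmeas, hind, hF⟩ := hIID
  have hdd : 1 ≤ d := by omega
  have haek : ∀ k : ℕ, ∀ᵐ ω ∂P, ∀ᶠ n : ℕ in atTop,
      0 ≤ (n:ℝ)⁻¹ * sSup {t : ℝ | ∃ z : Fin d → ℕ, (∑ i, z i) ≤ n ∧ t = lastPassage X z ω} ∧
      (n:ℝ)⁻¹ * sSup {t : ℝ | ∃ z : Fin d → ℕ, (∑ i, z i) ≤ n ∧ t = lastPassage X z ω}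
        ≤ 404 * ((∫ s in Set.Ici (0:ℝ), (1 - F s) ^ ((1:ℝ)/d)) + 1/((k:ℝ)+1)) := by
    intro k
    exact main_eventually hdd hmeas hind hF hInt
      (lt_add_of_pos_right _ (by positivity))
  rw [← ae_all_iff] at haek
  filter_upwards [haek] with ω hω
  set f : ℕ → ℝ := fun n => (n:ℝ)⁻¹ *
    sSup {t : ℝ | ∃ z : Fin d → ℕ, (∑ i, z i) ≤ n ∧ t = lastPassage X z ω} with hf
  have hcb : IsCoboundedUnder (· ≤ ·) atTop f :=
    isCoboundedUnder_le_of_eventually_le atTop ((hω 0).mono (fun n hn => hn.1))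
  have hlim : ∀ k : ℕ, Filter.limsup f atTop
      ≤ 404 * ((∫ s in Set.Ici (0:ℝ), (1 - F s) ^ ((1:ℝ)/d)) + 1/((k:ℝ)+1)) :=
    fun k => Filter.limsup_le_of_le hcb ((hω k).mono (fun n hn => hn.2))
  refine le_of_forall_pos_le_add ?_
  intro ε hε
  obtain ⟨k, hk⟩ := exists_nat_gt (404/ε)
  refine le_trans (hlim k) ?_
  have h1 : (404:ℝ) < ε * ((k:ℝ)+1) := by
    rw [div_lt_iff₀ hε] at hk
    have hk0 : (0:ℝ) ≤ k := Nat.cast_nonneg k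
    nlinarith
  have h2 : 404 * (1/((k:ℝ)+1)) ≤ ε := by
    rw [mul_one_div, div_le_iff₀ (by positivity : (0:ℝ) < (k:ℝ)+1)]
    nlinarith
  have h3 : 404 * ((∫ s in Set.Ici (0:ℝ), (1 - F s) ^ ((1:ℝ)/d)) + 1/((k:ℝ)+1))
      = 404 * (∫ s in Set.Ici (0:ℝ), (1 - F s) ^ ((1:ℝ)/d)) + 404*(1/((k:ℝ)+1)) := by
    ring
  rw [h3]
  linarith [h2]


end
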